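/- arXiv:1711.10058 — 5 statements merged into one kernel-verified Lean document; each statement's English description precedes it below -/
import Mathlib

section
/- Let X be an n×p real matrix, σ² > 0, and for u ∈ ℝ^p let C(u) = diag(e^{u_1},…,e^{u_p}). Then the function u ↦ log det(X C(u) X^T + σ² I) is convex on ℝ^p. -/
open Matrix

section auxiliary

open Finset

private lemma psd_det_nonneg' {m : Type*} [Fintype m] [DecidableEq m] {K : Matrix m m ℝ}
    (hK : K.PosSemidef) : 0 ≤ K.det := by
  rw [hK.isHermitian.det_eq_prod_eigenvalues]
  exact Finset.prod_nonneg fun i _ => by simpa using hK.eigenvalues_nonneg i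

private lemma psd_smul' {m : Type*} [Fintype m] {M : Matrix m m ℝ} (hM : M.PosSemidef)
    {c : ℝ} (hc : 0 ≤ c) : (c • M).PosSemidef := by
  exact hM.smul hc

private lemma det_piecewise_nonneg' {p : ℕ} {K : Matrix (Fin p) (Fin p) ℝ} (hK : K.PosSemidef)
    (s : Finset (Fin p)) :
    0 ≤ Matrix.det (Matrix.of (s.piecewise K (1 : Matrix (Fin p) (Fin p) ℝ))) := by
  classical
  set M : Matrix (Fin p) (Fin p) ℝ := Matrix.of (s.piecewise K (1 : Matrix (Fin p) (Fin p) ℝ)) with hM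
  have he := Matrix.det_submatrix_equiv_self (Equiv.sumCompl (fun i => i ∈ s)) M
  rw [← he]
  have hblock : M.submatrix (Equiv.sumCompl (fun i => i ∈ s)) (Equiv.sumCompl (fun i => i ∈ s))
      = Matrix.fromBlocks (K.submatrix (Subtype.val) (Subtype.val))
        (Matrix.of fun (i : {x // x ∈ s}) (j : {x // ¬ x ∈ s}) => K i.1 j.1)
        0 (1 : Matrix {x // ¬ x ∈ s} {x // ¬ x ∈ s} ℝ) := by
    ext (i | i) (j | j)
    · simp [M, Finset.piecewise, i.2]
    · simp [M, Finset.piecewise, i.2]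
    · have hij : (i : Fin p) ≠ (j : Fin p) := fun h => absurd (h ▸ j.2) i.2
      simp [M, Finset.piecewise, i.2, Matrix.one_apply_ne hij]
    · simp [M, Finset.piecewise, i.2, Matrix.one_apply, Subtype.ext_iff]
  rw [hblock, Matrix.det_fromBlocks_zero₂₁, Matrix.det_one, mul_one]
  exact psd_det_nonneg' (hK.submatrix _)

private lemma det_one_add_diagonal_mul' {p : ℕ} (d : Fin p → ℝ) (K : Matrix (Fin p) (Fin p) ℝ) :
    Matrix.det ((1 : Matrix (Fin p) (Fin p) ℝ) + Matrix.diagonal d * K)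
      = ∑ s : Finset (Fin p), (∏ i ∈ s, d i) *
          Matrix.det (Matrix.of (s.piecewise K (1 : Matrix (Fin p) (Fin p) ℝ))) := by
  classical
  have h0 : ((1 : Matrix (Fin p) (Fin p) ℝ) + Matrix.diagonal d * K)
      = Matrix.of ((fun i => d i • K i) + (fun i => (1 : Matrix (Fin p) (Fin p) ℝ) i)) := by
    ext i j
    simp [Matrix.diagonal_mul, Matrix.add_apply, add_comm]
  rw [h0]
  have hexp := (Matrix.detRowAlternating (R := ℝ) (n := Fin p)).toMultilinearMap.map_add_univ
      (fun i => d i • K i) (fun i => (1 : Matrix (Fin p) (Fin p) ℝ) i)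
  calc Matrix.det (Matrix.of ((fun i => d i • K i) + (fun i => (1 : Matrix (Fin p) (Fin p) ℝ) i)))
      = ∑ s : Finset (Fin p), (Matrix.detRowAlternating (R := ℝ) (n := Fin p)).toMultilinearMap
          (s.piecewise (fun i => d i • K i) (fun i => (1 : Matrix (Fin p) (Fin p) ℝ) i)) := hexp
    _ = ∑ s : Finset (Fin p), (∏ i ∈ s, d i) *
          Matrix.det (Matrix.of (s.piecewise K (1 : Matrix (Fin p) (Fin p) ℝ))) := by
        refine Finset.sum_congr rfl fun s _ => ?_
        have hsmul : s.piecewise (fun i => d i • K i) (fun i => (1 : Matrix (Fin p) (Fin p) ℝ) i)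
            = fun i => (s.piecewise d (fun _ => (1 : ℝ)) i) •
                ((s.piecewise K (1 : Matrix (Fin p) (Fin p) ℝ)) i) := by
          funext i
          by_cases hi : i ∈ s
          · rw [Finset.piecewise_eq_of_mem _ _ _ hi, Finset.piecewise_eq_of_mem _ _ _ hi]
            erw [Finset.piecewise_eq_of_mem _ _ _ hi]
          · rw [Finset.piecewise_eq_of_notMem _ _ _ hi, Finset.piecewise_eq_of_notMem _ _ _ hi]
            erw [Finset.piecewise_eq_of_notMem _ _ _ hi]
            rw [one_smul]
        rw [hsmul, MultilinearMap.map_smul_univ]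
        have hprod : (∏ i, s.piecewise d (fun _ => (1 : ℝ)) i) = ∏ i ∈ s, d i := by
          rw [Finset.prod_piecewise]
          simp
        rw [hprod, smul_eq_mul]
        rfl

private lemma holder_sum' {ι : Type*} [Fintype ι] (F G : ι → ℝ) (hF : ∀ i, 0 ≤ F i)
    (hG : ∀ i, 0 ≤ G i) {a b : ℝ} (ha : 0 < a) (hb : 0 < b) (hab : a + b = 1) :
    ∑ i, F i ^ a * G i ^ b ≤ (∑ i, F i) ^ a * (∑ i, G i) ^ b := by
  have hpq : Real.HolderConjugate (1/a) (1/b) := by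
    rw [Real.holderConjugate_iff]
    constructor
    · rw [lt_div_iff₀ ha]; linarith
    · rw [one_div, one_div, inv_inv, inv_inv]; exact hab
  have h := Real.inner_le_Lp_mul_Lq Finset.univ (fun i => F i ^ a) (fun i => G i ^ b) hpq
  have e1 : ∀ i ∈ Finset.univ (α := ι), |F i ^ a| ^ (1/a) = F i := fun i _ => by
    rw [abs_of_nonneg (Real.rpow_nonneg (hF i) a), ← Real.rpow_mul (hF i),
      mul_one_div_cancel ha.ne', Real.rpow_one]
  have e2 : ∀ i ∈ Finset.univ (α := ι), |G i ^ b| ^ (1/b) = G i := fun i _ => by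
    rw [abs_of_nonneg (Real.rpow_nonneg (hG i) b), ← Real.rpow_mul (hG i),
      mul_one_div_cancel hb.ne', Real.rpow_one]
  calc ∑ i, F i ^ a * G i ^ b
      ≤ (∑ i, |F i ^ a| ^ (1/a)) ^ (1/(1/a)) * (∑ i, |G i ^ b| ^ (1/b)) ^ (1/(1/b)) := h
    _ = (∑ i, F i) ^ a * (∑ i, G i) ^ b := by
        rw [Finset.sum_congr rfl e1, Finset.sum_congr rfl e2, one_div_one_div, one_div_one_div]

private lemma sum_ge_one' {p : ℕ} (c : Finset (Fin p) → ℝ) (hc0 : ∀ s, 0 ≤ c s)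
    (hce : c ∅ = 1) (u : Fin p → ℝ) :
    (1 : ℝ) ≤ ∑ s : Finset (Fin p), (∏ i ∈ s, Real.exp (u i)) * c s := by
  have h2 : (∏ i ∈ (∅ : Finset (Fin p)), Real.exp (u i)) * c ∅
      ≤ ∑ s : Finset (Fin p), (∏ i ∈ s, Real.exp (u i)) * c s :=
    Finset.single_le_sum (f := fun s => (∏ i ∈ s, Real.exp (u i)) * c s)
      (fun s _ => mul_nonneg (Finset.prod_nonneg fun i _ => (Real.exp_pos _).le) (hc0 s))
      (Finset.mem_univ ∅)
  simpa [hce] using h2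

private lemma logsumexp_convex' {p : ℕ} (c : Finset (Fin p) → ℝ) (hc0 : ∀ s, 0 ≤ c s)
    (hce : c ∅ = 1) :
    ConvexOn ℝ Set.univ (fun u : Fin p → ℝ =>
      Real.log (∑ s : Finset (Fin p), (∏ i ∈ s, Real.exp (u i)) * c s)) := by
  classical
  set g : (Fin p → ℝ) → ℝ :=
    fun u => ∑ s : Finset (Fin p), (∏ i ∈ s, Real.exp (u i)) * c s with hgdef
  have hgpos : ∀ u, 0 < g u := fun u => zero_lt_one.trans_le (sum_ge_one' c hc0 hce u)
  have hkey : ∀ (x y : Fin p → ℝ) (a b : ℝ), 0 < a → 0 < b → a + b = 1 →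
      g (a • x + b • y) ≤ g x ^ a * g y ^ b := by
    intro x y a b ha hb hab
    have hterm : ∀ s : Finset (Fin p),
        (∏ i ∈ s, Real.exp ((a • x + b • y) i)) * c s
          = ((∏ i ∈ s, Real.exp (x i)) * c s) ^ a * ((∏ i ∈ s, Real.exp (y i)) * c s) ^ b := by
      intro s
      have hx : (0 : ℝ) ≤ ∏ i ∈ s, Real.exp (x i) :=
        Finset.prod_nonneg fun i _ => (Real.exp_pos _).le
      have hy : (0 : ℝ) ≤ ∏ i ∈ s, Real.exp (y i) :=
        Finset.prod_nonneg fun i _ => (Real.exp_pos _).le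
      rw [Real.mul_rpow hx (hc0 s), Real.mul_rpow hy (hc0 s)]
      have hprod : (∏ i ∈ s, Real.exp ((a • x + b • y) i))
          = (∏ i ∈ s, Real.exp (x i)) ^ a * (∏ i ∈ s, Real.exp (y i)) ^ b := by
        rw [← Real.exp_sum, ← Real.exp_sum, ← Real.exp_sum, ← Real.exp_mul, ← Real.exp_mul,
          ← Real.exp_add]
        congr 1
        simp only [Pi.add_apply, Pi.smul_apply, smul_eq_mul]
        rw [Finset.sum_add_distrib, ← Finset.mul_sum, ← Finset.mul_sum]
        ring
      rw [hprod]
      rcases eq_or_lt_of_le (hc0 s) with h0 | hpos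
      · rw [← h0]
        simp [Real.zero_rpow ha.ne', Real.zero_rpow hb.ne']
      · have hcc : c s ^ a * c s ^ b = c s := by
          rw [← Real.rpow_add hpos, hab, Real.rpow_one]
        rw [mul_mul_mul_comm, hcc]
    calc g (a • x + b • y)
        = ∑ s : Finset (Fin p), ((∏ i ∈ s, Real.exp (x i)) * c s) ^ a
            * ((∏ i ∈ s, Real.exp (y i)) * c s) ^ b :=
          Finset.sum_congr rfl fun s _ => hterm s
      _ ≤ (∑ s : Finset (Fin p), (∏ i ∈ s, Real.exp (x i)) * c s) ^ a
            * (∑ s : Finset (Fin p), (∏ i ∈ s, Real.exp (y i)) * c s) ^ b :=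
          holder_sum' _ _
            (fun s => mul_nonneg (Finset.prod_nonneg fun i _ => (Real.exp_pos _).le) (hc0 s))
            (fun s => mul_nonneg (Finset.prod_nonneg fun i _ => (Real.exp_pos _).le) (hc0 s))
            ha hb hab
      _ = g x ^ a * g y ^ b := rfl
  refine ⟨convex_univ, ?_⟩
  intro x _ y _ a b ha hb hab
  simp only [smul_eq_mul]
  rcases eq_or_lt_of_le ha with rfl | ha'
  · have hb1 : b = 1 := by linarith
    subst hb1
    simp
  rcases eq_or_lt_of_le hb with rfl | hb'
  · have ha1 : a = 1 := by linarith
    subst ha1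
    simp
  have h1 := hkey x y a b ha' hb' hab
  have h2 : Real.log (g (a • x + b • y)) ≤ a * Real.log (g x) + b * Real.log (g y) := by
    calc Real.log (g (a • x + b • y)) ≤ Real.log (g x ^ a * g y ^ b) :=
          Real.log_le_log (hgpos _) h1
      _ = a * Real.log (g x) + b * Real.log (g y) := by
        rw [Real.log_mul (Real.rpow_pos_of_pos (hgpos x) a).ne'
          (Real.rpow_pos_of_pos (hgpos y) b).ne',
          Real.log_rpow (hgpos x), Real.log_rpow (hgpos y)]
  exact h2

end auxiliary

theorem logdet_convex {n p : ℕ} (X : Matrix (Fin n) (Fin p) ℝ) (σ2 : ℝ) (hσ : 0 < σ2) :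
    ConvexOn ℝ Set.univ (fun u : Fin p → ℝ =>
      Real.log (Matrix.det
        (X * Matrix.diagonal (fun i => Real.exp (u i)) * Xᵀ + σ2 • (1 : Matrix (Fin n) (Fin n) ℝ)))) := by
  classical
  set K : Matrix (Fin p) (Fin p) ℝ := σ2⁻¹ • (Xᵀ * X) with hKdef
  have hKpsd : K.PosSemidef := by
    have h1 : (Xᵀ * X).PosSemidef := by
      simpa using Matrix.posSemidef_conjTranspose_mul_self X
    exact psd_smul' h1 (by positivity)
  set c : Finset (Fin p) → ℝ :=
    fun s => Matrix.det (Matrix.of (s.piecewise K (1 : Matrix (Fin p) (Fin p) ℝ))) with hcdef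
  have hc0 : ∀ s, 0 ≤ c s := fun s => det_piecewise_nonneg' hKpsd s
  have hcempty : c ∅ = 1 := by
    rw [hcdef]
    show Matrix.det (Matrix.of ((∅ : Finset (Fin p)).piecewise K
      (1 : Matrix (Fin p) (Fin p) ℝ))) = 1
    erw [Finset.piecewise_empty]
    exact Matrix.det_one
  have key : ∀ u : Fin p → ℝ,
      Matrix.det (X * Matrix.diagonal (fun i => Real.exp (u i)) * Xᵀ
          + σ2 • (1 : Matrix (Fin n) (Fin n) ℝ))
        = σ2 ^ n * ∑ s : Finset (Fin p), (∏ i ∈ s, Real.exp (u i)) * c s := by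
    intro u
    set D : Matrix (Fin p) (Fin p) ℝ := Matrix.diagonal (fun i => Real.exp (u i)) with hDdef
    have hM : X * D * Xᵀ + σ2 • (1 : Matrix (Fin n) (Fin n) ℝ)
        = σ2 • ((1 : Matrix (Fin n) (Fin n) ℝ) + X * (σ2⁻¹ • (D * Xᵀ))) := by
      rw [smul_add, Matrix.mul_smul, smul_smul, mul_inv_cancel₀ hσ.ne', one_smul,
        Matrix.mul_assoc, add_comm]
    rw [hM, Matrix.det_smul, Matrix.det_one_add_mul_comm]
    have h2 : (σ2⁻¹ • (D * Xᵀ)) * X = D * K := by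
      rw [Matrix.smul_mul, Matrix.mul_assoc, hKdef, Matrix.mul_smul]
    rw [h2, hDdef, det_one_add_diagonal_mul']
    simp [hcdef]
  have hfun : (fun u : Fin p → ℝ =>
      Real.log (Matrix.det
        (X * Matrix.diagonal (fun i => Real.exp (u i)) * Xᵀ
          + σ2 • (1 : Matrix (Fin n) (Fin n) ℝ))))
      = fun u => Real.log (σ2 ^ n)
          + Real.log (∑ s : Finset (Fin p), (∏ i ∈ s, Real.exp (u i)) * c s) := by
    funext u
    rw [key u, Real.log_mul (by positivity)
      (zero_lt_one.trans_le (sum_ge_one' c hc0 hcempty u)).ne']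
  rw [hfun]
  exact (convexOn_const _ convex_univ).add (logsumexp_convex' c hc0 hcempty)
end

section
/- The function u ↦ log det(V + diag(e^{-u})) is convex on ℝ^p, where V is any positive semidefinite p×p matrix. -/
set_option maxHeartbeats 1000000


open Matrix

private lemma psd_det_nonneg {n : Type*} [Fintype n] [DecidableEq n]
    {A : Matrix n n ℝ} (hA : A.PosSemidef) : 0 ≤ A.det := by
  exact hA.det_nonneg

private lemma det_one' {α : Type*} (d : DecidableEq α) (i : Fintype α) :
    @Matrix.det α d i ℝ _ 1 = 1 := Matrix.det_one

private lemma det_irrel {α : Type*} (d1 d2 : DecidableEq α) (i1 i2 : Fintype α)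
    (A : Matrix α α ℝ) : @Matrix.det α d1 i1 ℝ _ A = @Matrix.det α d2 i2 ℝ _ A := by
  cases Subsingleton.elim d1 d2
  cases Subsingleton.elim i1 i2
  rfl

private lemma det_add_diagonal {p : ℕ} (V : Matrix (Fin p) (Fin p) ℝ) (d : Fin p → ℝ) :
    (V + Matrix.diagonal d).det =
      ∑ s : Finset (Fin p), (∏ i ∈ s, d i) *
        (V.toSquareBlockProp (fun a => ¬ a ∈ s)).det := by
  classical
  set D : Matrix (Fin p) (Fin p) ℝ := Matrix.diagonal d with hD
  have hof : (V + D) = Matrix.of ((fun i => D i) + fun i => V i) := by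
    ext i j
    simp [add_comm]
  rw [hof]
  have h := MultilinearMap.map_add_univ
    ((Matrix.detRowAlternating : (Fin p → ℝ) [⋀^Fin p]→ₗ[ℝ] ℝ)).toMultilinearMap
    (fun i => D i) (fun i => V i)
  have hdet : (Matrix.of ((fun i => D i) + fun i => V i)).det
      = ∑ s : Finset (Fin p),
          (Matrix.detRowAlternating : (Fin p → ℝ) [⋀^Fin p]→ₗ[ℝ] ℝ).toMultilinearMap
            (s.piecewise (fun i => D i) (fun i => V i)) := h
  rw [hdet]
  refine Finset.sum_congr rfl fun s _ => ?_
  -- base rows: identity rows on s, V rows off s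
  set e : Fin p → (Fin p → ℝ) := fun i => Pi.single i (1 : ℝ) with he
  set N : Matrix (Fin p) (Fin p) ℝ := Matrix.of (s.piecewise e fun i => V i) with hN
  have hDrow : ∀ i, D i = d i • e i := by
    intro i
    funext j
    by_cases hij : i = j
    · subst hij; simp [hD, e]
    · simp [hD, e, Matrix.diagonal_apply_ne _ hij, Pi.single_eq_of_ne (Ne.symm hij)]
  have hpw : s.piecewise (fun i => D i) (fun i => V i)
      = s.piecewise (fun i => d i • (s.piecewise e fun i => V i) i)
          (s.piecewise e fun i => V i) := by
    funext i
    by_cases hi : i ∈ s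
    · simp [Finset.piecewise_eq_of_mem _ _ _ hi, hDrow i]
    · simp [Finset.piecewise_eq_of_notMem _ _ _ hi]
  rw [hpw, MultilinearMap.map_piecewise_smul]
  have hbase : (Matrix.detRowAlternating : (Fin p → ℝ) [⋀^Fin p]→ₗ[ℝ] ℝ).toMultilinearMap
      (s.piecewise e fun i => V i) = N.det := rfl
  rw [hbase]
  have htri := Matrix.twoBlockTriangular_det' N (fun a => a ∈ s)
    (fun i hi j hj => by
      have : N i j = e i j := by simp [hN, Finset.piecewise_eq_of_mem _ _ _ hi]
      rw [this, he]
      exact Pi.single_eq_of_ne (by rintro rfl; exact hj hi) 1)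
  have hone : N.toSquareBlockProp (fun a => a ∈ s) = 1 := by
    ext i j
    have : N (i : Fin p) (j : Fin p) = e i j := by
      simp [hN, Finset.piecewise_eq_of_mem _ _ _ i.2]
    by_cases hij : i = j
    · subst hij
      simp [Matrix.toSquareBlockProp, this, he]
    · have hij' : (j : Fin p) ≠ (i : Fin p) := fun h => hij (Subtype.ext h.symm)
      simp [Matrix.toSquareBlockProp, this, he, Pi.single_eq_of_ne hij',
        Matrix.one_apply_ne hij]
  have hV' : N.toSquareBlockProp (fun a => ¬ a ∈ s) = V.toSquareBlockProp (fun a => ¬ a ∈ s) := by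
    ext i j
    simp [Matrix.toSquareBlockProp, hN, Finset.piecewise_eq_of_notMem _ _ _ i.2]
  rw [smul_eq_mul, htri, hone, det_one' _ _, one_mul, hV']

theorem logdet_convex' {p : ℕ} (V : Matrix (Fin p) (Fin p) ℝ) (hV : V.PosSemidef) :
    ConvexOn ℝ Set.univ (fun u : Fin p → ℝ =>
      Real.log (Matrix.det (V + Matrix.diagonal (fun i => Real.exp (-u i))))) := by
  classical
  set m : Finset (Fin p) → ℝ := fun s => (V.toSquareBlockProp (fun a => ¬ a ∈ s)).det with hm
  have hm0 : ∀ s, 0 ≤ m s := by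
    intro s
    exact psd_det_nonneg (hV.submatrix _)
  set F : (Fin p → ℝ) → ℝ := fun u => ∑ s : Finset (Fin p), m s * Real.exp (∑ i ∈ s, -u i)
    with hF
  have hFdet : ∀ u : Fin p → ℝ,
      (V + Matrix.diagonal (fun i => Real.exp (-u i))).det = F u := by
    intro u
    rw [det_add_diagonal]
    refine Finset.sum_congr rfl fun s _ => ?_
    rw [Real.exp_sum, mul_comm]
  have hFpos : ∀ u, 0 < F u := by
    intro u
    have hmu : m Finset.univ = 1 := by
      haveI : IsEmpty {a : Fin p // ¬ a ∈ (Finset.univ : Finset (Fin p))} :=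
        ⟨fun a => a.2 (Finset.mem_univ _)⟩
      exact Matrix.det_isEmpty
    have hterm : 0 < m Finset.univ * Real.exp (∑ i ∈ Finset.univ, -u i) := by
      rw [hmu, one_mul]; exact Real.exp_pos _
    refine lt_of_lt_of_le hterm ?_
    exact Finset.single_le_sum (f := fun s : Finset (Fin p) => m s * Real.exp (∑ i ∈ s, -u i))
      (fun s _ => mul_nonneg (hm0 s) (Real.exp_pos _).le) (Finset.mem_univ _)
  refine ⟨convex_univ, fun x _ y _ a b ha hb hab => ?_⟩
  simp only [hFdet, smul_eq_mul]
  rcases eq_or_lt_of_le ha with rfl | ha'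
  · rw [zero_add] at hab
    subst hab
    simp
  rcases eq_or_lt_of_le hb with rfl | hb'
  · rw [add_zero] at hab
    subst hab
    simp
  have ha1 : a < 1 := by linarith
  have hconj : Real.HolderConjugate (1/a) (1/b) := by
    rw [Real.holderConjugate_iff]
    constructor
    · rw [lt_div_iff₀ ha', one_mul]; exact ha1
    · simp only [one_div, inv_inv]; exact hab
  have key : F (a • x + b • y) ≤ F x ^ a * F y ^ b := by
    have step1 : F (a • x + b • y)
        = ∑ s : Finset (Fin p),
            (m s * Real.exp (∑ i ∈ s, -x i)) ^ a * (m s * Real.exp (∑ i ∈ s, -y i)) ^ b := by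
      refine Finset.sum_congr rfl fun s _ => ?_
      have hsum : (∑ i ∈ s, -(a • x + b • y) i)
          = (∑ i ∈ s, -x i) * a + (∑ i ∈ s, -y i) * b := by
        rw [Finset.sum_mul, Finset.sum_mul, ← Finset.sum_add_distrib]
        refine Finset.sum_congr rfl fun i _ => ?_
        simp only [Pi.add_apply, Pi.smul_apply, smul_eq_mul]
        ring
      rw [hsum, Real.exp_add, Real.exp_mul, Real.exp_mul,
        Real.mul_rpow (hm0 s) (Real.exp_pos _).le,
        Real.mul_rpow (hm0 s) (Real.exp_pos _).le]
      have hms : m s = m s ^ a * m s ^ b := by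
        rw [← Real.rpow_add' (hm0 s) (by rw [hab]; norm_num), hab, Real.rpow_one]
      calc m s * (Real.exp (∑ i ∈ s, -x i) ^ a * Real.exp (∑ i ∈ s, -y i) ^ b)
          = (m s ^ a * m s ^ b) *
              (Real.exp (∑ i ∈ s, -x i) ^ a * Real.exp (∑ i ∈ s, -y i) ^ b) := by rw [← hms]
        _ = m s ^ a * Real.exp (∑ i ∈ s, -x i) ^ a *
              (m s ^ b * Real.exp (∑ i ∈ s, -y i) ^ b) := by ring
    rw [step1]
    have hHolder := Real.inner_le_Lp_mul_Lq_of_nonneg (Finset.univ)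
      (f := fun s : Finset (Fin p) => (m s * Real.exp (∑ i ∈ s, -x i)) ^ a)
      (g := fun s : Finset (Fin p) => (m s * Real.exp (∑ i ∈ s, -y i)) ^ b)
      hconj
      (fun s _ => Real.rpow_nonneg (mul_nonneg (hm0 s) (Real.exp_pos _).le) _)
      (fun s _ => Real.rpow_nonneg (mul_nonneg (hm0 s) (Real.exp_pos _).le) _)
    have hpow : ∀ (c t : ℝ), 0 ≤ c → 0 < t → (c ^ t) ^ (1/t) = c := by
      intro c t hc ht
      rw [← Real.rpow_mul hc, mul_one_div_cancel ht.ne', Real.rpow_one]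
    have hx' : ∀ s ∈ (Finset.univ : Finset (Finset (Fin p))),
        ((m s * Real.exp (∑ i ∈ s, -x i)) ^ a) ^ (1/a) = m s * Real.exp (∑ i ∈ s, -x i) :=
      fun s _ => hpow _ _ (mul_nonneg (hm0 s) (Real.exp_pos _).le) ha'
    have hy' : ∀ s ∈ (Finset.univ : Finset (Finset (Fin p))),
        ((m s * Real.exp (∑ i ∈ s, -y i)) ^ b) ^ (1/b) = m s * Real.exp (∑ i ∈ s, -y i) :=
      fun s _ => hpow _ _ (mul_nonneg (hm0 s) (Real.exp_pos _).le) hb'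
    rw [Finset.sum_congr rfl hx', Finset.sum_congr rfl hy', one_div_one_div, one_div_one_div]
      at hHolder
    exact hHolder
  calc Real.log (F (a • x + b • y)) ≤ Real.log (F x ^ a * F y ^ b) :=
        Real.log_le_log (hFpos _) key
    _ = a * Real.log (F x) + b * Real.log (F y) := by
        rw [Real.log_mul (Real.rpow_pos_of_pos (hFpos x) _).ne'
          (Real.rpow_pos_of_pos (hFpos y) _).ne',
          Real.log_rpow (hFpos x), Real.log_rpow (hFpos y)]
end

section
/- For any u ∈ ℝ^p, the Hessian of u ↦ log det(V + diag(e^{-u})) equals the Hadamard product of V(diag(e^u)V + I)^{-1} and (diag(e^{-u}) + V)^{-1}, and this Hadamard product is positive semidefinite whenever both factors are positive semidefinite. -/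
open Matrix Real

variable {p : ℕ}

noncomputable def detCMM (p : ℕ) : ContinuousMultilinearMap ℝ (fun _ : Fin p => Fin p → ℝ) ℝ :=
  MultilinearMap.mkContinuous
    ((Matrix.detRowAlternating : AlternatingMap ℝ (Fin p → ℝ) ℝ (Fin p)).toMultilinearMap)
    (p.factorial) (by
      intro m
      have : (Matrix.detRowAlternating (R := ℝ) (n := Fin p)).toMultilinearMap m
          = Matrix.det (Matrix.of m) := rfl
      rw [this, Matrix.det_apply]
      refine (norm_sum_le _ _).trans ?_
      have hterm : ∀ σ : Equiv.Perm (Fin p),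
          ‖Equiv.Perm.sign σ • ∏ i, Matrix.of m (σ i) i‖ ≤ ∏ i, ‖m i‖ := by
        intro σ
        rw [show (Equiv.Perm.sign σ • ∏ i, Matrix.of m (σ i) i)
            = ((Equiv.Perm.sign σ : ℤ) : ℝ) * ∏ i, Matrix.of m (σ i) i by
          rw [Units.smul_def, zsmul_eq_mul]]
        rw [norm_mul]
        have h1 : ‖((Equiv.Perm.sign σ : ℤ) : ℝ)‖ = 1 := by
          rcases Int.units_eq_one_or (Equiv.Perm.sign σ) with h | h <;> simp [h]
        rw [h1, one_mul]
        calc ‖∏ i, Matrix.of m (σ i) i‖ ≤ ∏ i, ‖m (σ i)‖ := by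
              rw [norm_prod]
              exact Finset.prod_le_prod (fun _ _ => norm_nonneg _)
                (fun i _ => norm_le_pi_norm (m (σ i)) i)
          _ = ∏ i, ‖m i‖ := Equiv.prod_comp σ (fun i => ‖m i‖)
      calc (∑ σ : Equiv.Perm (Fin p), ‖Equiv.Perm.sign σ • ∏ i, Matrix.of m (σ i) i‖)
            ≤ ∑ _σ : Equiv.Perm (Fin p), ∏ i, ‖m i‖ :=
              Finset.sum_le_sum fun σ _ => hterm σ
        _ = (p.factorial : ℝ) * ∏ i, ‖m i‖ := by
              rw [Finset.sum_const, Finset.card_univ, Fintype.card_perm, Fintype.card_fin,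
                nsmul_eq_mul])

attribute [local instance] Matrix.linftyOpNormedAddCommGroup Matrix.linftyOpNormedSpace
  Matrix.linftyOpNormedRing Matrix.linftyOpNormedAlgebra

noncomputable def rowsCLM (p : ℕ) : Matrix (Fin p) (Fin p) ℝ →L[ℝ] (Fin p → Fin p → ℝ) :=
  LinearMap.toContinuousLinearMap
    { toFun := fun A => fun i => A i
      map_add' := fun _ _ => rfl
      map_smul' := fun _ _ => rfl }

lemma hasFDerivAt_det' (A : Matrix (Fin p) (Fin p) ℝ) :
    HasFDerivAt (fun B : Matrix (Fin p) (Fin p) ℝ => B.det)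
      (((detCMM p).linearDeriv (rowsCLM p A)).comp (rowsCLM p)) A :=
  ((detCMM p).hasFDerivAt (rowsCLM p A)).comp A (rowsCLM p).hasFDerivAt

lemma detderiv_apply (A H : Matrix (Fin p) (Fin p) ℝ) :
    (((detCMM p).linearDeriv (rowsCLM p A)).comp (rowsCLM p)) H
      = ∑ i, Matrix.det (A.updateRow i (H i)) := by
  simp only [ContinuousLinearMap.comp_apply, ContinuousMultilinearMap.linearDeriv_apply]
  rfl

noncomputable def diagCLM (p : ℕ) : (Fin p → ℝ) →L[ℝ] Matrix (Fin p) (Fin p) ℝ :=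
  LinearMap.toContinuousLinearMap (Matrix.diagonalLinearMap (Fin p) ℝ ℝ)

lemma diagCLM_apply (d : Fin p → ℝ) : diagCLM p d = Matrix.diagonal d := by
  simp [diagCLM]

noncomputable def ECLM (w : Fin p → ℝ) : (Fin p → ℝ) →L[ℝ] (Fin p → ℝ) :=
  ContinuousLinearMap.pi fun k => Real.exp (-w k) • -(ContinuousLinearMap.proj k)

lemma hasFDerivAt_E (w : Fin p → ℝ) :
    HasFDerivAt (fun (v : Fin p → ℝ) (k : Fin p) => Real.exp (-v k)) (ECLM w) w := by
  apply hasFDerivAt_pi.2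
  intro k
  exact (Real.hasDerivAt_exp (-w k)).comp_hasFDerivAt w
    (((ContinuousLinearMap.proj k : (Fin p → ℝ) →L[ℝ] ℝ)).hasFDerivAt.neg)

section Main

variable (V : Matrix (Fin p) (Fin p) ℝ)

noncomputable def Mm (w : Fin p → ℝ) : Matrix (Fin p) (Fin p) ℝ :=
  V + Matrix.diagonal fun k => Real.exp (-w k)

lemma Mm_posdef (hV : V.PosSemidef) (w : Fin p → ℝ) : (Mm V w).PosDef :=
  Matrix.PosDef.posSemidef_add hV (Matrix.posDef_diagonal_iff.mpr fun k => Real.exp_pos _)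

lemma Mm_det_ne (hV : V.PosSemidef) (w : Fin p → ℝ) : (Mm V w).det ≠ 0 := (Mm_posdef V hV w).det_pos.ne'

lemma hasFDerivAt_Mm (w : Fin p → ℝ) :
    HasFDerivAt (Mm V) ((diagCLM p).comp (ECLM w)) w := by
  have h := ((diagCLM p).hasFDerivAt.comp w (hasFDerivAt_E w)).const_add V
  have hfun : (fun x => V + (⇑(diagCLM p) ∘ fun (v : Fin p → ℝ) k => Real.exp (-v k)) x) = Mm V := by
    funext x
    simp [Mm, Function.comp, diagCLM_apply]
  rw [hfun] at h
  exact h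

lemma hasFDerivAt_logdet (hV : V.PosSemidef) (w : Fin p → ℝ) :
    HasFDerivAt (fun v => Real.log ((Mm V v).det))
      (((Mm V w).det)⁻¹ •
        ((((detCMM p).linearDeriv (rowsCLM p (Mm V w))).comp (rowsCLM p)).comp
          ((diagCLM p).comp (ECLM w)))) w :=
  (Real.hasDerivAt_log (Mm_det_ne V hV w)).comp_hasFDerivAt (h₂ := Real.log) w
    ((hasFDerivAt_det' (Mm V w)).comp w (hasFDerivAt_Mm V w))

lemma single_eq_smul (i : Fin p) (c : ℝ) :
    (Pi.single i c : Fin p → ℝ) = c • (Pi.single i 1 : Fin p → ℝ) := by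
  rw [← Pi.single_smul, smul_eq_mul, mul_one]

lemma diag_row (d : Fin p → ℝ) (i : Fin p) :
    Matrix.diagonal d i = Pi.single i (d i) := by
  funext j
  simp [Matrix.diagonal_apply, Pi.single_apply, eq_comm]

lemma fderiv_logdet (hV : V.PosSemidef) (w : Fin p → ℝ) (j : Fin p) :
    fderiv ℝ (fun v => Real.log ((Mm V v).det)) w (Pi.single j 1)
      = -(Real.exp (-w j) * ((Mm V w)⁻¹ j j)) := by
  rw [(hasFDerivAt_logdet V hV w).fderiv]
  rw [ContinuousLinearMap.smul_apply, ContinuousLinearMap.comp_apply]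
  have hdval : ((diagCLM p).comp (ECLM w)) (Pi.single j 1)
      = Matrix.diagonal (fun k => Real.exp (-w k) * -((Pi.single j 1 : Fin p → ℝ) k)) := by
    rw [ContinuousLinearMap.comp_apply]
    have : ECLM w (Pi.single j 1) = fun k => Real.exp (-w k) * -((Pi.single j 1 : Fin p → ℝ) k) := by
      funext k
      simp [ECLM]
    rw [this, diagCLM_apply]
  rw [hdval]
  rw [detderiv_apply]
  have hrow : ∀ i : Fin p,
      Matrix.det ((Mm V w).updateRow i
        ((Matrix.diagonal (fun k => Real.exp (-w k) * -((Pi.single j 1 : Fin p → ℝ) k))) i))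
      = (Real.exp (-w i) * -((Pi.single j 1 : Fin p → ℝ) i)) * Matrix.adjugate (Mm V w) i i := by
    intro i
    rw [diag_row]
    rw [single_eq_smul, Matrix.det_updateRow_smul, ← Matrix.adjugate_apply]
  simp only [hrow]
  rw [Finset.sum_eq_single j]
  · rw [Pi.single_eq_same]
    have hBjj : (Mm V w)⁻¹ j j = ((Mm V w).det)⁻¹ * Matrix.adjugate (Mm V w) j j := by
      rw [Matrix.inv_def, Matrix.smul_apply, Ring.inverse_eq_inv, smul_eq_mul]
    rw [hBjj, smul_eq_mul]; ring
  · intro b _ hb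
    rw [Pi.single_eq_of_ne hb]; ring
  · intro h; exact absurd (Finset.mem_univ j) h

end Main

noncomputable def entryCLM (p : ℕ) (a b : Fin p) : Matrix (Fin p) (Fin p) ℝ →L[ℝ] ℝ :=
  LinearMap.toContinuousLinearMap
    { toFun := fun A => A a b
      map_add' := fun _ _ => rfl
      map_smul' := fun _ _ => rfl }

lemma entryCLM_apply (a b : Fin p) (A : Matrix (Fin p) (Fin p) ℝ) :
    entryCLM p a b A = A a b := by simp [entryCLM]; rfl

lemma hasFDerivAt_inv_Mm (V : Matrix (Fin p) (Fin p) ℝ) (hV : V.PosSemidef) (u : Fin p → ℝ) :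
    HasFDerivAt (fun v => (Mm V v)⁻¹)
      ((-(ContinuousLinearMap.mulLeftRight ℝ _ ((Mm V u)⁻¹) ((Mm V u)⁻¹))).comp
        ((diagCLM p).comp (ECLM u))) u := by
  have hU : IsUnit (Mm V u) :=
    (Matrix.isUnit_iff_isUnit_det _).mpr (isUnit_iff_ne_zero.mpr (Mm_det_ne V hV u))
  have h1 := hasFDerivAt_ringInverse (𝕜 := ℝ) hU.unit
  rw [IsUnit.unit_spec] at h1
  have hco : ((hU.unit⁻¹ : (Matrix (Fin p) (Fin p) ℝ)ˣ) : Matrix (Fin p) (Fin p) ℝ)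
      = (Mm V u)⁻¹ := by
    rw [Matrix.coe_units_inv, IsUnit.unit_spec]
  rw [hco] at h1
  have h2 := h1.comp u (hasFDerivAt_Mm V u)
  have hfun : (Ring.inverse ∘ Mm V) = fun v => (Mm V v)⁻¹ := by
    funext v
    simp only [Function.comp_apply, Matrix.nonsing_inv_eq_ringInverse]
  rw [hfun] at h2
  exact h2

lemma fderiv_second (V : Matrix (Fin p) (Fin p) ℝ) (hV : V.PosSemidef) (u : Fin p → ℝ)
    (i j : Fin p) :
    fderiv ℝ (fun v => -(Real.exp (-v j) * ((Mm V v)⁻¹ j j))) u (Pi.single i 1)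
      = -(Real.exp (-u j) * (Real.exp (-u i) * ((Mm V u)⁻¹ j i * (Mm V u)⁻¹ i j))
          - (if i = j then Real.exp (-u j) * (Mm V u)⁻¹ j j else 0)) := by
  have hexpj : HasFDerivAt (fun v : Fin p → ℝ => Real.exp (-v j))
      (Real.exp (-u j) • -(ContinuousLinearMap.proj j : (Fin p → ℝ) →L[ℝ] ℝ)) u :=
    (Real.hasDerivAt_exp (-u j)).comp_hasFDerivAt (h₂ := Real.exp) u
      (((ContinuousLinearMap.proj j : (Fin p → ℝ) →L[ℝ] ℝ)).hasFDerivAt.neg)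
  have hEntry := ((entryCLM p j j).hasFDerivAt).comp u (hasFDerivAt_inv_Mm V hV u)
  have hg := ((hexpj.mul hEntry).neg).fderiv
  rw [show (fun v => -(Real.exp (-v j) * ((Mm V v)⁻¹ j j)))
      = fun v => -(Real.exp (-v j) * (entryCLM p j j) ((Mm V v)⁻¹)) by
    funext v; rw [entryCLM_apply]]
  simp only [Function.comp_def, Pi.mul_def, Pi.neg_def] at hg
  rw [hg]
  simp only [ContinuousLinearMap.neg_apply, ContinuousLinearMap.add_apply,
    ContinuousLinearMap.smul_apply, ContinuousLinearMap.comp_apply,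
    ContinuousLinearMap.proj_apply, smul_eq_mul]
  have hdval : ((diagCLM p).comp (ECLM u)) (Pi.single i 1)
      = Matrix.diagonal (fun k => Real.exp (-u k) * -((Pi.single i 1 : Fin p → ℝ) k)) := by
    rw [ContinuousLinearMap.comp_apply]
    have : ECLM u (Pi.single i 1) = fun k => Real.exp (-u k) * -((Pi.single i 1 : Fin p → ℝ) k) := by
      funext k
      simp [ECLM]
    rw [this, diagCLM_apply]
  rw [ContinuousLinearMap.comp_apply] at hdval
  have hX : ((entryCLM p j j).comp ((-(ContinuousLinearMap.mulLeftRight ℝ _ ((Mm V u)⁻¹) ((Mm V u)⁻¹))).comp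
      ((diagCLM p).comp (ECLM u)))) (Pi.single i 1)
      = -(((Mm V u)⁻¹ * Matrix.diagonal (fun k => Real.exp (-u k) * -((Pi.single i 1 : Fin p → ℝ) k))
        * (Mm V u)⁻¹) j j) := by
    rw [← hdval]; rfl
  erw [hX]
  set B := (Mm V u)⁻¹
  have hmul : (B * Matrix.diagonal (fun k => Real.exp (-u k) * -((Pi.single i 1 : Fin p → ℝ) k))
      * B) j j = B j i * (Real.exp (-u i) * -(1:ℝ)) * B i j := by
    rw [Matrix.mul_apply]
    rw [Finset.sum_eq_single i]
    · rw [Matrix.mul_diagonal, Pi.single_eq_same]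
    · intro b _ hb
      rw [Matrix.mul_diagonal, Pi.single_eq_of_ne hb]
      ring
    · intro h; exact absurd (Finset.mem_univ i) h
  simp only [ContinuousLinearMap.neg_apply, ContinuousLinearMap.mulLeftRight_apply,
    entryCLM_apply, Matrix.neg_apply, hmul]
  by_cases hij : i = j
  · subst hij
    rw [Pi.single_eq_same, if_pos rfl]
    ring
  · rw [Pi.single_eq_of_ne (Ne.symm hij), if_neg hij]
    ring

lemma rhs_matrix_eq (V : Matrix (Fin p) (Fin p) ℝ) (hV : V.PosSemidef) (u : Fin p → ℝ) :
    V * (Matrix.diagonal (fun k => Real.exp (u k)) * V + 1)⁻¹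
      = Matrix.diagonal (fun k => Real.exp (-u k))
        - Matrix.diagonal (fun k => Real.exp (-u k)) * (Mm V u)⁻¹
          * Matrix.diagonal (fun k => Real.exp (-u k)) := by
  have hDD : Matrix.diagonal (fun k => Real.exp (u k)) * V + 1
      = Matrix.diagonal (fun k => Real.exp (u k)) * Mm V u := by
    rw [Mm, mul_add, Matrix.diagonal_mul_diagonal]
    congr 1
    rw [show (fun k => Real.exp (u k) * Real.exp (-u k)) = fun _ => (1:ℝ) by
      funext k; rw [← Real.exp_add, add_neg_cancel, Real.exp_zero]]
    exact Matrix.diagonal_one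
  rw [hDD, Matrix.mul_inv_rev, Matrix.inv_diagonal]
  have hinv : (Ring.inverse fun k => Real.exp (u k)) = fun k => Real.exp (-u k) := by
    have hUu : ((fun k => Real.exp (u k)) : Fin p → ℝ) * (fun k => Real.exp (-u k)) = 1 := by
      funext k
      simp [← Real.exp_add]
    have hUu' : ((fun k => Real.exp (-u k)) : Fin p → ℝ) * (fun k => Real.exp (u k)) = 1 := by
      rw [mul_comm]; exact hUu
    exact Ring.inverse_unit ⟨(fun k => Real.exp (u k)), (fun k => Real.exp (-u k)), hUu, hUu'⟩
  rw [hinv]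
  have hVeq : V = Mm V u - Matrix.diagonal (fun k => Real.exp (-u k)) := by
    rw [Mm]; abel
  conv_lhs => enter [1]; rw [hVeq]
  rw [Matrix.sub_mul, ← Matrix.mul_assoc]
  rw [Matrix.mul_nonsing_inv _ (isUnit_iff_ne_zero.mpr (Mm_det_ne V hV u))]
  rw [Matrix.one_mul, Matrix.mul_assoc]

theorem hessian_logdet_hadamard {p : ℕ} (V : Matrix (Fin p) (Fin p) ℝ) (hV : V.PosSemidef)
    (u : Fin p → ℝ) :
    (∀ i j, fderiv ℝ (fun v : Fin p → ℝ =>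
        fderiv ℝ (fun w : Fin p → ℝ =>
          Real.log (Matrix.det (V + Matrix.diagonal (fun k => Real.exp (-w k))))) v
          (Pi.single j 1)) u (Pi.single i 1)
      = (Matrix.hadamard
          (V * (Matrix.diagonal (fun k => Real.exp (u k)) * V + 1)⁻¹)
          ((Matrix.diagonal (fun k => Real.exp (-u k)) + V)⁻¹)) i j) ∧
    (∀ A B : Matrix (Fin p) (Fin p) ℝ, A.PosSemidef → B.PosSemidef →
      (Matrix.hadamard A B).PosSemidef) := by
  constructor
  · intro i j
    have hfun : (fun v : Fin p → ℝ =>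
        fderiv ℝ (fun w : Fin p → ℝ =>
          Real.log (Matrix.det (V + Matrix.diagonal (fun k => Real.exp (-w k))))) v
          (Pi.single j 1))
        = fun v => -(Real.exp (-v j) * ((Mm V v)⁻¹ j j)) :=
      funext fun v => fderiv_logdet V hV v j
    rw [hfun, fderiv_second V hV u i j]
    -- now the RHS
    have hBB : (Matrix.diagonal (fun k => Real.exp (-u k)) + V)⁻¹ = (Mm V u)⁻¹ := by
      rw [Mm, add_comm]
    rw [Matrix.hadamard_apply, rhs_matrix_eq V hV u, hBB]
    set B := (Mm V u)⁻¹ with hB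
    have hsymm : B j i = B i j := by
      have hh : B.IsHermitian := ((Mm_posdef V hV u).isHermitian).inv
      have := congrFun (congrFun hh i) j
      simpa [Matrix.conjTranspose_apply] using this
    rw [Matrix.sub_apply, Matrix.mul_assoc, Matrix.diagonal_mul, Matrix.mul_diagonal,
      Matrix.diagonal_apply]
    rw [hsymm]
    by_cases hij : i = j
    · subst hij; rw [if_pos rfl, if_pos rfl]; ring
    · rw [if_neg hij, if_neg hij]; ring
  · intro A B hA hB
    obtain ⟨C, hC⟩ : ∃ C : Matrix (Fin p) (Fin p) ℝ, A = Cᴴ * C := by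
      open scoped MatrixOrder Matrix.Norms.L2Operator in
      exact (CStarAlgebra.nonneg_iff_eq_star_mul_self.mp hA.nonneg)
    refine Matrix.PosSemidef.of_dotProduct_mulVec_nonneg ?_ ?_
    · have hAh := hA.1
      have hBh := hB.1
      ext i j
      simp only [Matrix.conjTranspose_apply, Matrix.hadamard_apply, star_mul']
      have h1 : star (A j i) = A i j := congrFun (congrFun hAh i) j
      have h2 : star (B j i) = B i j := congrFun (congrFun hBh i) j
      rw [h1, h2]
    · intro x
      have key : star x ⬝ᵥ (Matrix.hadamard A B) *ᵥ x
          = ∑ k, star (fun i => x i * C k i) ⬝ᵥ B *ᵥ (fun i => x i * C k i) := by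
        rw [hC]
        simp only [dotProduct, Matrix.mulVec, Matrix.hadamard_apply, Matrix.mul_apply,
          Matrix.conjTranspose_apply, star_trivial, Finset.mul_sum, Finset.sum_mul,
          dotProduct]
        conv_lhs => enter [2,a]; rw [Finset.sum_comm]
        rw [Finset.sum_comm]
        refine Finset.sum_congr rfl fun k _ => Finset.sum_congr rfl fun a _ =>
          Finset.sum_congr rfl fun b _ => by ring
      rw [key]
      exact Finset.sum_nonneg fun k _ => hB.dotProduct_mulVec_nonneg _
end

section
/- Define F(u) = z^T e^{-u} + (1/2) log det(X diag(e^u) X^T + σ² I) + (1/2)(u − b1)^T K^{-1} (u − b1) for fixed z with nonnegative entries, X ∈ ℝ^{n×p}, σ² > 0, b ∈ ℝ, and K positive definite. Then F is coercive: F(u) → ∞ as ‖u‖ → ∞. -/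
open Matrix

private lemma real_psd_dot {m : ℕ} {A : Matrix (Fin m) (Fin m) ℝ} (hA : A.PosSemidef)
    (x : Fin m → ℝ) : 0 ≤ x ⬝ᵥ A *ᵥ x := by
  have := hA.re_dotProduct_nonneg x
  simpa using this

private lemma eig_lb {m : ℕ} {A : Matrix (Fin m) (Fin m) ℝ} (hA : A.IsHermitian) {c : ℝ}
    (h : ∀ x : Fin m → ℝ, c * (x ⬝ᵥ x) ≤ x ⬝ᵥ A *ᵥ x) (i : Fin m) :
    c ≤ hA.eigenvalues i := by
  have hv := hA.eigenvalues_eq i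
  set v : Fin m → ℝ := ⇑(hA.eigenvectorBasis i) with hvdef
  have hnorm : v ⬝ᵥ v = 1 := by
    have h1 : (inner ℝ (hA.eigenvectorBasis i) (hA.eigenvectorBasis i) : ℝ) = 1 := by
      rw [real_inner_self_eq_norm_mul_norm, hA.eigenvectorBasis.orthonormal.1 i]; norm_num
    simp only [PiLp.inner_apply, RCLike.inner_apply, conj_trivial] at h1
    simpa [dotProduct, hvdef, mul_comm] using h1
  have h2 := h v
  rw [hnorm, mul_one] at h2
  have h3 : hA.eigenvalues i = v ⬝ᵥ A *ᵥ v := by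
    simpa using hv
  linarith

private lemma posdef_dot_lb {m : ℕ} {A : Matrix (Fin m) (Fin m) ℝ} (hA : A.PosDef) :
    ∃ c : ℝ, 0 < c ∧ ∀ v : Fin m → ℝ, c * (v ⬝ᵥ v) ≤ v ⬝ᵥ A *ᵥ v := by
  rcases Nat.eq_zero_or_pos m with hm | hm
  · refine ⟨1, one_pos, fun v => ?_⟩
    subst hm
    simp [dotProduct]
  haveI : Nonempty (Fin m) := Fin.pos_iff_nonempty.mp hm
  obtain ⟨i0, hi0⟩ := Finite.exists_min hA.1.eigenvalues
  set c := hA.1.eigenvalues i0 with hcdef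
  have hc : 0 < c := hA.eigenvalues_pos i0
  refine ⟨c, hc, fun v => ?_⟩
  set U : Matrix (Fin m) (Fin m) ℝ := (hA.1.eigenvectorUnitary : Matrix (Fin m) (Fin m) ℝ)
    with hUdef
  have hUU : U * star U = 1 := mem_unitaryGroup_iff.mp (hA.1.eigenvectorUnitary).2
  have hsub : A - c • (1 : Matrix (Fin m) (Fin m) ℝ)
      = U * Matrix.diagonal (fun i => hA.1.eigenvalues i - c) * star U := by
    have h0 : Matrix.diagonal (fun i => hA.1.eigenvalues i - c)
        = Matrix.diagonal (RCLike.ofReal ∘ hA.1.eigenvalues)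
          - c • (1 : Matrix (Fin m) (Fin m) ℝ) := by
      rw [smul_one_eq_diagonal, ← diagonal_sub]
      congr 1
    have hs := hA.1.spectral_theorem
    rw [Unitary.conjStarAlgAut_apply] at hs
    rw [h0, Matrix.mul_sub, Matrix.sub_mul, ← hs]
    congr 1
    rw [Matrix.mul_smul, Matrix.mul_one, Matrix.smul_mul, hUU]
  have hpsd : (A - c • (1 : Matrix (Fin m) (Fin m) ℝ)).PosSemidef := by
    rw [hsub, Matrix.star_eq_conjTranspose]
    exact (Matrix.posSemidef_diagonal_iff.mpr
      (fun i => sub_nonneg.mpr (hi0 i))).mul_mul_conjTranspose_same U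
  have h2 := real_psd_dot hpsd v
  have h3 : v ⬝ᵥ (A - c • (1 : Matrix (Fin m) (Fin m) ℝ)) *ᵥ v
      = v ⬝ᵥ A *ᵥ v - c * (v ⬝ᵥ v) := by
    rw [sub_mulVec, dotProduct_sub, smul_mulVec, one_mulVec, dotProduct_smul, smul_eq_mul]
  linarith

theorem auxiliary_cost_coercive {n p : ℕ} (X : Matrix (Fin n) (Fin p) ℝ) (σ2 : ℝ)
    (hσ : 0 < σ2) (z : Fin p → ℝ) (hz : ∀ i, 0 ≤ z i) (b : ℝ)
    (K : Matrix (Fin p) (Fin p) ℝ) (hK : K.PosDef) :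
    ∀ M : ℝ, ∃ R : ℝ, ∀ u : Fin p → ℝ, R < ‖u‖ →
      M < z ⬝ᵥ (fun i => Real.exp (-u i))
          + (1 / 2) * Real.log (Matrix.det
              (X * Matrix.diagonal (fun i => Real.exp (u i)) * Xᵀ
                + σ2 • (1 : Matrix (Fin n) (Fin n) ℝ)))
          + (1 / 2) * ((u - fun _ => b) ⬝ᵥ K⁻¹.mulVec (u - fun _ => b)) := by
  intro M
  rcases Nat.eq_zero_or_pos p with hp | hp
  · refine ⟨0, fun u hu => absurd hu ?_⟩
    subst hp
    have : u = 0 := Subsingleton.elim u 0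
    simp [this]
  haveI : Nonempty (Fin p) := Fin.pos_iff_nonempty.mp hp
  obtain ⟨c, hc, hquad⟩ := posdef_dot_lb hK.inv
  set C := (1 / 2 : ℝ) * Real.log (σ2 ^ n) with hCdef
  set t := 2 * (max (M - C) 0 + 1) / c with htdef
  have ht : 0 < t := by positivity
  refine ⟨|b| + Real.sqrt t, fun u hu => ?_⟩
  set v : Fin p → ℝ := u - fun _ => b with hvdef
  -- norm squared vs dot product
  have hdotself : ∀ w : Fin p → ℝ, 0 ≤ w ⬝ᵥ w :=
    fun w => Finset.sum_nonneg fun i _ => mul_self_nonneg _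
  have hnd : ‖v‖ ^ 2 ≤ v ⬝ᵥ v := by
    have h1 : ‖v‖ ≤ Real.sqrt (v ⬝ᵥ v) := by
      refine (pi_norm_le_iff_of_nonneg (Real.sqrt_nonneg _)).mpr fun i => ?_
      rw [Real.norm_eq_abs, ← Real.sqrt_sq_eq_abs]
      refine Real.sqrt_le_sqrt ?_
      rw [dotProduct, sq]
      exact Finset.single_le_sum (fun j _ => mul_self_nonneg (v j)) (Finset.mem_univ i)
    calc ‖v‖ ^ 2 ≤ Real.sqrt (v ⬝ᵥ v) ^ 2 := by
          exact pow_le_pow_left₀ (norm_nonneg v) h1 2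
      _ = v ⬝ᵥ v := Real.sq_sqrt (hdotself v)
  -- lower bound for ‖v‖
  have hvnorm : Real.sqrt t < ‖v‖ := by
    have h1 : ‖(fun _ : Fin p => b)‖ ≤ |b| := by
      simpa using pi_norm_const_le b
    have h2 : ‖u‖ - ‖(fun _ : Fin p => b)‖ ≤ ‖v‖ := norm_sub_norm_le _ _
    linarith
  have hv2 : t < ‖v‖ ^ 2 := by
    have := pow_lt_pow_left₀ hvnorm (Real.sqrt_nonneg t) two_ne_zero
    rwa [Real.sq_sqrt ht.le] at this
  -- quadratic term
  have hq1 : c * t < c * (v ⬝ᵥ v) := by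
    have : c * t < c * ‖v‖ ^ 2 := by nlinarith
    nlinarith
  have hct : c * t = 2 * (max (M - C) 0 + 1) := by
    rw [htdef, mul_div_cancel₀ _ hc.ne']
  have hq2 : 2 * (max (M - C) 0 + 1) < v ⬝ᵥ K⁻¹.mulVec v := by
    have := hquad v
    linarith [hct ▸ hq1]
  -- first term nonneg
  have h1 : 0 ≤ z ⬝ᵥ fun i => Real.exp (-u i) :=
    Finset.sum_nonneg fun i _ => mul_nonneg (hz i) (Real.exp_pos _).le
  -- log det term
  set D := Matrix.diagonal (fun i => Real.exp (u i)) with hDdef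
  have hD : D.PosSemidef :=
    posSemidef_diagonal_iff.mpr fun i => (Real.exp_pos _).le
  have hXDX : (X * D * Xᵀ).PosSemidef := by
    have := hD.mul_mul_conjTranspose_same X
    rwa [conjTranspose_eq_transpose_of_trivial] at this
  set S := X * D * Xᵀ + σ2 • (1 : Matrix (Fin n) (Fin n) ℝ) with hSdef
  have hsig : (σ2 • (1 : Matrix (Fin n) (Fin n) ℝ)).PosSemidef := by
    rw [smul_one_eq_diagonal]
    exact posSemidef_diagonal_iff.mpr fun _ => hσ.le
  have hS : S.PosSemidef := hXDX.add hsig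
  have hquadS : ∀ x : Fin n → ℝ, σ2 * (x ⬝ᵥ x) ≤ x ⬝ᵥ S *ᵥ x := by
    intro x
    have ha := real_psd_dot hXDX x
    have hb : x ⬝ᵥ S *ᵥ x = x ⬝ᵥ (X * D * Xᵀ) *ᵥ x + σ2 * (x ⬝ᵥ x) := by
      rw [hSdef, add_mulVec, dotProduct_add, smul_mulVec, one_mulVec,
        dotProduct_smul, smul_eq_mul]
    linarith
  have heig := eig_lb hS.1 hquadS
  have hdet : σ2 ^ n ≤ S.det := by
    rw [hS.1.det_eq_prod_eigenvalues]
    push_cast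
    calc σ2 ^ n = ∏ _i : Fin n, σ2 := by
          rw [Finset.prod_const, Finset.card_univ, Fintype.card_fin]
      _ ≤ _ := Finset.prod_le_prod (fun _ _ => hσ.le) (fun i _ => heig i)
  have hlog : Real.log (σ2 ^ n) ≤ Real.log S.det :=
    Real.log_le_log (pow_pos hσ n) hdet
  have hmax : M - C ≤ max (M - C) 0 := le_max_left _ _
  linarith
end

section
/- In the iterative scheme where u^{k+1} minimizes the auxiliary cost F(u, z^k) = (z^k)^T h(u) − L_h*(z^k) + L₁(u) + L₃(u) with z^k = ∇Φ(η)|_{η = h(u^k)}, the objective L(u) = Φ(h(u)) + L₁(u) + L₃(u) is monotonically nonincreasing: L(u^{k+1}) ≤ L(u^k), with strict inequality unless u^k is a minimizer of F(·, z^k). -/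
open Matrix

/-- Monotone descent of the two-stage convex relaxation: if `u'` minimizes the auxiliary cost
`F(·, z)` with `z = ∇Φ(h uᵏ)`, where `zᵀ h(u) − L*(z) ≥ Φ(h u)` for all `u, z`, with equality
at `z = ∇Φ(h u)`, then the objective `L(u) = Φ(h u) + L₁(u) + L₃(u)` satisfies
`L(u') ≤ L(uᵏ)`, strictly unless `uᵏ` itself minimizes `F(·, z)`. -/
theorem mm_monotone_descent {p q : ℕ}
    (h : (Fin p → ℝ) → (Fin q → ℝ)) (Φ : (Fin q → ℝ) → ℝ)
    (gradΦ : (Fin q → ℝ) → (Fin q → ℝ)) (Lstar : (Fin q → ℝ) → ℝ)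
    (L₁ L₃ : (Fin p → ℝ) → ℝ)
    (hbound : ∀ (u : Fin p → ℝ) (z : Fin q → ℝ),
      Φ (h u) ≤ z ⬝ᵥ h u - Lstar z)
    (htight : ∀ u : Fin p → ℝ,
      gradΦ (h u) ⬝ᵥ h u - Lstar (gradΦ (h u)) = Φ (h u))
    (F : (Fin p → ℝ) → (Fin q → ℝ) → ℝ)
    (hF : ∀ u z, F u z = z ⬝ᵥ h u - Lstar z + L₁ u + L₃ u)
    (Lobj : (Fin p → ℝ) → ℝ)
    (hL : ∀ u, Lobj u = Φ (h u) + L₁ u + L₃ u)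
    (uk u' : Fin p → ℝ)
    (hmin : ∀ w, F u' (gradΦ (h uk)) ≤ F w (gradΦ (h uk))) :
    Lobj u' ≤ Lobj uk ∧
    (¬ (∀ w, F uk (gradΦ (h uk)) ≤ F w (gradΦ (h uk))) → Lobj u' < Lobj uk) := by
  set z := gradΦ (h uk) with hz
  have h1 : Lobj u' ≤ F u' z := by
    rw [hL, hF]
    have := hbound u' z
    linarith
  have h2 : F uk z = Lobj uk := by
    rw [hL, hF, htight]
  constructor
  · have := hmin uk
    linarith
  · intro hnot
    push_neg at hnot
    obtain ⟨w, hw⟩ := hnot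
    have := hmin w
    linarith
end
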